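/- Let f : ℝ → ℝ be Lebesgue integrable on every compact interval such that the improper integral ∫_{-∞}^∞ f exists, and suppose there is a > 0 such that f is of bounded variation on (-∞,-a] and of bounded variation on [a,∞). Then the Fourier transform f̂(y) = ∫_{-∞}^∞ f(x)e^{−2πixy} dx exists as an improper integral for every y ∈ ℝ, and the function y ↦ f̂(y) is continuous at every point y ≠ 0. -/

import Mathlib

open MeasureTheory Filter Topology intervalIntegral

/-- The improper integral `∫_{-∞}^∞ h = L` (real-valued). -/
def HasImpInt (h : ℝ → ℝ) (L : ℝ) : Prop :=
  ∃ L₁ L₂ : ℝ,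
    Tendsto (fun c => ∫ x in c..(0:ℝ), h x) atBot (𝓝 L₁) ∧
    Tendsto (fun c => ∫ x in (0:ℝ)..c, h x) atTop (𝓝 L₂) ∧ L = L₁ + L₂

/-- The improper integral `∫_{-∞}^∞ h = z` (complex-valued). -/
def HasImpIntC (h : ℝ → ℂ) (z : ℂ) : Prop :=
  ∃ z₁ z₂ : ℂ,
    Tendsto (fun c => ∫ x in c..(0:ℝ), h x) atBot (𝓝 z₁) ∧
    Tendsto (fun c => ∫ x in (0:ℝ)..c, h x) atTop (𝓝 z₂) ∧ z = z₁ + z₂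

/-- The Fourier kernel `e^{-2πixy}`. -/
noncomputable def fourierKernel (x y : ℝ) : ℂ :=
  Complex.exp (-(2 * Real.pi * Complex.I * x * y))

open Function

lemma fourierKernel_eq (x y : ℝ) :
    fourierKernel x y = Complex.exp (((-(2 * Real.pi * y) : ℝ) * Complex.I) * (x : ℝ)) := by
  unfold fourierKernel
  congr 1
  push_cast
  ring

lemma fourierKernel_norm (x y : ℝ) : ‖fourierKernel x y‖ = 1 := by
  rw [fourierKernel_eq, Complex.norm_exp]
  have : (((-(2 * Real.pi * y) : ℝ) * Complex.I) * (x : ℝ)).re = 0 := by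
    simp [Complex.mul_re]
  rw [this, Real.exp_zero]

lemma fourierKernel_continuous_fst (y : ℝ) : Continuous fun x => fourierKernel x y := by
  unfold fourierKernel
  exact Complex.continuous_exp.comp
    (((continuous_const.mul Complex.continuous_ofReal).mul continuous_const).neg)

lemma fourierKernel_continuous_snd (x : ℝ) : Continuous fun y => fourierKernel x y := by
  unfold fourierKernel
  exact Complex.continuous_exp.comp
    ((continuous_const.mul Complex.continuous_ofReal).neg)

lemma fourierKernel_zero (x : ℝ) : fourierKernel x 0 = 1 := by
  unfold fourierKernel; simp

lemma fourierKernel_neg (x y : ℝ) : fourierKernel (-x) y = fourierKernel x (-y) := by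
  unfold fourierKernel; push_cast; ring_nf

lemma fourierKernel_prim {y : ℝ} (hy : y ≠ 0) (s t : ℝ) :
    ‖∫ x in s..t, fourierKernel x y‖ ≤ 1 / (Real.pi * |y|) := by
  have hπ := Real.pi_pos
  have hc : ((-(2 * Real.pi * y) : ℝ) * Complex.I : ℂ) ≠ 0 := by
    simp only [ne_eq, mul_eq_zero, Complex.I_ne_zero, or_false, Complex.ofReal_eq_zero]
    intro h
    apply hy
    nlinarith [h, Real.pi_pos]
  have heq : ∀ x : ℝ, fourierKernel x y =
      Complex.exp ((((-(2 * Real.pi * y) : ℝ) * Complex.I)) * (x : ℝ)) := fun x =>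
    fourierKernel_eq x y
  have : (∫ x in s..t, fourierKernel x y) =
      ∫ x in s..t, Complex.exp ((((-(2 * Real.pi * y) : ℝ) * Complex.I)) * (x : ℝ)) := by
    simp only [heq]
  rw [this, integral_exp_mul_complex hc]
  rw [norm_div]
  have h1 : ∀ u : ℝ, ‖Complex.exp ((((-(2 * Real.pi * y) : ℝ) * Complex.I)) * (u : ℝ))‖ = 1 := by
    intro u
    rw [← fourierKernel_eq]
    exact fourierKernel_norm u y
  have h2 : ‖((-(2 * Real.pi * y) : ℝ) * Complex.I : ℂ)‖ = 2 * Real.pi * |y| := by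
    rw [norm_mul, Complex.norm_I, mul_one, Complex.norm_real, Real.norm_eq_abs, abs_neg,
      abs_mul, abs_of_pos (by positivity : (0:ℝ) < 2 * Real.pi)]
  rw [h2]
  have h3 : ‖Complex.exp ((((-(2 * Real.pi * y) : ℝ) * Complex.I)) * (t : ℝ)) -
      Complex.exp ((((-(2 * Real.pi * y) : ℝ) * Complex.I)) * (s : ℝ))‖ ≤ 2 := by
    apply (norm_sub_le _ _).trans
    rw [h1, h1]; norm_num
  have habs : 0 < |y| := abs_pos.mpr hy
  rw [div_le_div_iff₀ (by positivity) (by positivity)]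
  calc ‖_ - _‖ * (Real.pi * |y|) ≤ 2 * (Real.pi * |y|) :=
        mul_le_mul_of_nonneg_right h3 (by positivity)
    _ = 1 * (2 * Real.pi * |y|) := by ring


lemma dirichlet_bound {φ : ℝ → ℝ} (hφ : Antitone φ) (hφ0 : ∀ x, 0 ≤ φ x)
    {K : ℝ → ℂ} (hK : Continuous K) (hK1 : ∀ x, ‖K x‖ ≤ 1)
    {M : ℝ} (hM : 0 ≤ M) (hprim : ∀ s t : ℝ, ‖∫ x in s..t, K x‖ ≤ M)
    {b c : ℝ} (hbc : b ≤ c) :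
    ‖∫ x in b..c, (φ x : ℂ) * K x‖ ≤ 2 * M * φ b := by
  set ψ : ℝ → ℝ := fun x => -φ x with hψdef
  have hψ : Monotone ψ := fun x y h => neg_le_neg (hφ h)
  set σ := hψ.stieltjesFunction with hσdef
  have hσ : ∀ x, σ x = rightLim ψ x := fun _ => rfl
  have hσmono : Monotone σ := σ.mono
  have hσ_le : ∀ x, σ x ≤ 0 := by
    intro x
    have h1 : σ x ≤ ψ (x + 1) := hψ.rightLim_le (lt_add_one x)
    exact h1.trans (neg_nonpos.2 (hφ0 _))
  have hσ_ge : ∀ x, ψ x ≤ σ x := fun x => hψ.le_rightLim le_rfl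
  have hσφ : ∀ x, -σ x ≤ φ x := by
    intro x
    have := hσ_ge x
    simp only [hψdef] at this
    linarith
  -- Step A : replace φ by right-continuous modification
  have hstepA : ∫ x in b..c, (φ x : ℂ) * K x = ∫ x in b..c, ((-σ x : ℝ) : ℂ) * K x := by
    apply intervalIntegral.integral_congr_ae
    have hcnt : Set.Countable {x : ℝ | ¬ ContinuousAt ψ x} := hψ.countable_not_continuousAt
    have h0 : ∀ᵐ x : ℝ, x ∉ {x : ℝ | ¬ ContinuousAt ψ x} :=
      measure_eq_zero_iff_ae_notMem.mp (hcnt.measure_zero volume)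
    filter_upwards [h0] with x hx _
    have hcont : ContinuousAt ψ x := not_not.mp hx
    have : rightLim ψ x = ψ x :=
      rightLim_eq_of_tendsto
        (hcont.tendsto.mono_left nhdsWithin_le_nhds)
    rw [hσ, this]
    simp [hψdef]
  rw [hstepA, intervalIntegral.integral_of_le hbc]
  set μ := σ.measure with hμdef
  have hμIoc : ∀ s t : ℝ, μ (Set.Ioc s t) = ENNReal.ofReal (σ t - σ s) :=
    fun s t => σ.measure_Ioc s t
  haveI hfin : IsFiniteMeasure (μ.restrict (Set.Ioc b c)) := by
    constructor
    rw [Measure.restrict_apply_univ, hμIoc]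
    exact ENNReal.ofReal_lt_top
  haveI hfinv : IsFiniteMeasure (volume.restrict (Set.Ioc b c)) := by
    constructor
    rw [Measure.restrict_apply_univ]
    exact measure_Ioc_lt_top
  have hKint : IntegrableOn K (Set.Ioc b c) volume := hK.integrableOn_Ioc
  have hmeasσ : Measurable fun x => σ x := hσmono.measurable
  have hint2 : IntegrableOn (fun x => ((σ c - σ x : ℝ) : ℂ) * K x) (Set.Ioc b c) volume := by
    apply Integrable.mono' (integrable_const (σ c - σ b))
    · exact ((Complex.measurable_ofReal.comp (measurable_const.sub hmeasσ)).aestronglyMeasurable.mul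
        hK.aestronglyMeasurable)
    · filter_upwards [ae_restrict_mem measurableSet_Ioc] with x hx
      rw [norm_mul, Complex.norm_real]
      have h1 : σ b ≤ σ x := hσmono hx.1.le
      have h2 : σ x ≤ σ c := hσmono hx.2
      calc ‖σ c - σ x‖ * ‖K x‖ ≤ (σ c - σ b) * 1 := by
            apply mul_le_mul _ (hK1 x) (norm_nonneg _) (by linarith)
            rw [Real.norm_eq_abs, abs_of_nonneg (by linarith)]; linarith
        _ = σ c - σ b := mul_one _
  have hsplit : ∫ x in Set.Ioc b c, ((-σ x : ℝ) : ℂ) * K x =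
      (∫ x in Set.Ioc b c, ((-σ c : ℝ) : ℂ) * K x) +
        ∫ x in Set.Ioc b c, ((σ c - σ x : ℝ) : ℂ) * K x := by
    rw [← integral_add (hKint.const_mul _) hint2]
    apply setIntegral_congr_fun measurableSet_Ioc
    intro x _
    push_cast
    ring
  rw [hsplit]
  have htermA : ‖∫ x in Set.Ioc b c, ((-σ c : ℝ) : ℂ) * K x‖ ≤ M * φ b := by
    rw [MeasureTheory.integral_const_mul, norm_mul, Complex.norm_real, Real.norm_eq_abs,
      abs_of_nonneg (by linarith [hσ_le c])]
    have h1 : ‖∫ x in Set.Ioc b c, K x‖ ≤ M := by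
      rw [← intervalIntegral.integral_of_le hbc]; exact hprim b c
    have h2 : -σ c ≤ φ b := le_trans (by linarith [hσmono hbc]) (hσφ b)
    calc -σ c * ‖∫ x in Set.Ioc b c, K x‖ ≤ φ b * M :=
          mul_le_mul h2 h1 (norm_nonneg _) (hφ0 b)
      _ = M * φ b := mul_comm _ _
  have htermB : ‖∫ x in Set.Ioc b c, ((σ c - σ x : ℝ) : ℂ) * K x‖ ≤ M * φ b := by
    have hpt : ∀ x ∈ Set.Ioc b c, ((σ c - σ x : ℝ) : ℂ) * K x =
        ∫ t in Set.Ioc b c, (Set.Ioi x).indicator (fun _ => K x) t ∂μ := by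
      intro x hx
      rw [MeasureTheory.integral_indicator measurableSet_Ioi, Measure.restrict_restrict measurableSet_Ioi]
      have hinter : Set.Ioi x ∩ Set.Ioc b c = Set.Ioc x c := by
        ext t
        simp only [Set.mem_inter_iff, Set.mem_Ioi, Set.mem_Ioc]
        constructor
        · rintro ⟨h1, _, h3⟩; exact ⟨h1, h3⟩
        · rintro ⟨h1, h2⟩; exact ⟨h1, lt_trans hx.1 h1, h2⟩
      rw [hinter, setIntegral_const, measureReal_def, hμIoc, ENNReal.toReal_ofReal (by linarith [hσmono hx.2]),
        Complex.real_smul]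
    rw [setIntegral_congr_fun measurableSet_Ioc hpt]
    -- Fubini
    have hsmeas : MeasurableSet {p : ℝ × ℝ | p.1 < p.2} :=
      measurableSet_lt measurable_fst measurable_snd
    have huncurry : (uncurry fun x t => (Set.Ioi x).indicator (fun _ => K x) t) =
        Set.indicator {p : ℝ × ℝ | p.1 < p.2} (fun p => K p.1) := by
      funext p
      by_cases h : p.1 < p.2 <;>
        simp [Set.indicator_apply, Set.mem_Ioi, uncurry, h]
    have hintF : Integrable (uncurry fun x t => (Set.Ioi x).indicator (fun _ => K x) t)
        ((volume.restrict (Set.Ioc b c)).prod (μ.restrict (Set.Ioc b c))) := by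
      rw [huncurry]
      apply Integrable.mono' (integrable_const 1)
      · exact (((hK.comp continuous_fst).stronglyMeasurable).indicator hsmeas).aestronglyMeasurable
      · apply ae_of_all
        intro p
        exact (norm_indicator_le_norm_self _ _).trans (hK1 _)
    rw [integral_integral_swap hintF]
    have hbound : ∀ t ∈ Set.Ioc b c,
        ‖∫ x in Set.Ioc b c, (Set.Ioi x).indicator (fun _ => K x) t‖ ≤ M := by
      intro t ht
      have hpt2 : ∀ x ∈ Set.Ioc b c, (Set.Ioi x).indicator (fun _ => K x) t =
          (Set.Iio t).indicator K x := by
        intro x _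
        by_cases h : x < t <;> simp [Set.indicator_apply, Set.mem_Ioi, Set.mem_Iio, h]
      rw [setIntegral_congr_fun measurableSet_Ioc hpt2,
        MeasureTheory.integral_indicator measurableSet_Iio, Measure.restrict_restrict measurableSet_Iio]
      have hinter : Set.Iio t ∩ Set.Ioc b c = Set.Ioo b t := by
        ext x
        simp only [Set.mem_inter_iff, Set.mem_Iio, Set.mem_Ioc, Set.mem_Ioo]
        constructor
        · rintro ⟨h1, h2, _⟩; exact ⟨h2, h1⟩
        · rintro ⟨h1, h2⟩; exact ⟨h2, h1, le_trans h2.le ht.2⟩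
      rw [hinter, ← integral_Ioc_eq_integral_Ioo, ← intervalIntegral.integral_of_le ht.1.le]
      exact hprim b t
    calc ‖∫ t in Set.Ioc b c, (∫ x in Set.Ioc b c, (Set.Ioi x).indicator (fun _ => K x) t) ∂μ‖
        ≤ M * (μ.restrict (Set.Ioc b c) Set.univ).toReal := by
          apply MeasureTheory.norm_integral_le_of_norm_le_const
          filter_upwards [ae_restrict_mem measurableSet_Ioc] with t ht
          exact hbound t ht
      _ ≤ M * φ b := by
          rw [Measure.restrict_apply_univ, hμIoc, ENNReal.toReal_ofReal (by linarith [hσmono hbc])]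
          apply mul_le_mul_of_nonneg_left _ hM
          have := hσφ b
          have := hσ_le c
          linarith
  calc ‖_ + _‖ ≤ M * φ b + M * φ b := le_trans (norm_add_le _ _) (add_le_add htermA htermB)
    _ = 2 * M * φ b := by ring


lemma exists_antitone_decomp (f : ℝ → ℝ) (a : ℝ)
    (hfloc : ∀ c d : ℝ, IntervalIntegrable f volume c d)
    {L₂ : ℝ} (hL : Tendsto (fun c => ∫ x in (0:ℝ)..c, f x) atTop (𝓝 L₂))
    (hBV : BoundedVariationOn f (Set.Ici a)) :
    ∃ φ₁ φ₂ : ℝ → ℝ, Antitone φ₁ ∧ Antitone φ₂ ∧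
      Tendsto φ₁ atTop (𝓝 0) ∧ Tendsto φ₂ atTop (𝓝 0) ∧
      (∀ x, 0 ≤ φ₁ x) ∧ (∀ x, 0 ≤ φ₂ x) ∧
      ∀ x, a ≤ x → f x = φ₁ x - φ₂ x := by
  have hloc : LocallyBoundedVariationOn f (Set.Ici a) := hBV.locallyBoundedVariationOn
  set v : ℝ → ℝ := variationOnFromTo f (Set.Ici a) a with hv
  have hmemA : a ∈ Set.Ici a := Set.self_mem_Ici
  have hvmono : MonotoneOn v (Set.Ici a) := variationOnFromTo.monotoneOn hloc hmemA
  have hhmono : MonotoneOn (v - f) (Set.Ici a) := variationOnFromTo.sub_self_monotoneOn hloc hmemA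
  set T : ℝ := (eVariationOn f (Set.Ici a)).toReal with hT
  have hvbound : ∀ x, a ≤ x → v x ≤ T := by
    intro x hx
    rw [hv, variationOnFromTo.eq_of_le f _ hx]
    exact ENNReal.toReal_mono hBV (eVariationOn.mono f Set.inter_subset_left)
  have hfbound : ∀ x, a ≤ x → |f x - f a| ≤ T := by
    intro x hx
    rw [← Real.dist_eq, dist_edist]
    exact ENNReal.toReal_mono hBV (eVariationOn.edist_le f (Set.mem_Ici.2 hx) hmemA)
  set G : ℝ → ℝ := fun x => v (max x a) with hG
  set H : ℝ → ℝ := fun x => (v - f) (max x a) with hH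
  have hGmono : Monotone G := fun x y hxy =>
    hvmono (Set.mem_Ici.2 (le_max_right _ _)) (Set.mem_Ici.2 (le_max_right _ _))
      (max_le_max hxy le_rfl)
  have hHmono : Monotone H := fun x y hxy =>
    hhmono (Set.mem_Ici.2 (le_max_right _ _)) (Set.mem_Ici.2 (le_max_right _ _))
      (max_le_max hxy le_rfl)
  have hGbdd : BddAbove (Set.range G) := by
    refine ⟨T, ?_⟩
    rintro _ ⟨x, rfl⟩
    exact hvbound _ (le_max_right _ _)
  have hHbdd : BddAbove (Set.range H) := by
    refine ⟨2 * T - f a, ?_⟩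
    rintro _ ⟨x, rfl⟩
    have h1 := hvbound _ (le_max_right x a)
    have h2 := hfbound _ (le_max_right x a)
    have h3 := abs_le.1 h2
    simp only [hH, Pi.sub_apply]
    linarith [h3.1]
  have hGt : Tendsto G atTop (𝓝 (⨆ x, G x)) := tendsto_atTop_ciSup hGmono hGbdd
  have hHt : Tendsto H atTop (𝓝 (⨆ x, H x)) := tendsto_atTop_ciSup hHmono hHbdd
  set LG := ⨆ x, G x with hLG
  set LH := ⨆ x, H x with hLH
  have hfeq : ∀ x, a ≤ x → f x = G x - H x := by
    intro x hx
    simp only [hG, hH, Pi.sub_apply, max_eq_left hx]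
    ring
  have hft : Tendsto f atTop (𝓝 (LG - LH)) := by
    apply (hGt.sub hHt).congr'
    filter_upwards [eventually_ge_atTop a] with x hx
    exact (hfeq x hx).symm
  have key : Tendsto (fun c => ∫ x in c..(c + 1), f x) atTop (𝓝 0) := by
    have h1 : ∀ c : ℝ, ∫ x in c..(c + 1), f x =
        (∫ x in (0:ℝ)..(c + 1), f x) - ∫ x in (0:ℝ)..c, f x := by
      intro c
      rw [← integral_add_adjacent_intervals (hfloc 0 c) (hfloc c (c + 1))]
      ring
    simp only [h1]
    have h2 : Tendsto (fun c : ℝ => ∫ x in (0:ℝ)..(c + 1), f x) atTop (𝓝 L₂) :=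
      hL.comp (tendsto_atTop_add_const_right atTop 1 tendsto_id)
    simpa using h2.sub hL
  have key2 : Tendsto (fun c => ∫ x in c..(c + 1), f x) atTop (𝓝 (LG - LH)) := by
    rw [Metric.tendsto_atTop]
    intro ε hε
    obtain ⟨N, hN⟩ := (Metric.tendsto_atTop.1 hft) (ε / 2) (by positivity)
    refine ⟨N, fun c hc => ?_⟩
    have hsub : (∫ x in c..(c + 1), f x) - (LG - LH) =
        ∫ x in c..(c + 1), (f x - (LG - LH)) := by
      rw [intervalIntegral.integral_sub (hfloc _ _) intervalIntegrable_const,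
        intervalIntegral.integral_const]
      simp
    rw [Real.dist_eq, hsub]
    have hb : ∀ x ∈ Set.uIoc c (c + 1), ‖f x - (LG - LH)‖ ≤ ε / 2 := by
      intro x hx
      rw [Set.uIoc_of_le (by linarith : c ≤ c + 1)] at hx
      have := hN x (le_trans hc hx.1.le)
      rw [Real.dist_eq] at this
      exact le_of_lt this
    have := intervalIntegral.norm_integral_le_of_norm_le_const hb
    rw [Real.norm_eq_abs] at this
    have h5 : |c + 1 - c| = 1 := by norm_num
    rw [h5, mul_one] at this
    calc |∫ x in c..(c+1), (f x - (LG - LH))| ≤ ε / 2 := this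
      _ < ε := by linarith
  have hzero : LG - LH = 0 := tendsto_nhds_unique key2 key
  refine ⟨fun x => LH - H x, fun x => LG - G x, ?_, ?_, ?_, ?_, ?_, ?_, ?_⟩
  · exact fun x y hxy => sub_le_sub_left (hHmono hxy) _
  · exact fun x y hxy => sub_le_sub_left (hGmono hxy) _
  · simpa using (tendsto_const_nhds : Tendsto (fun _ : ℝ => LH) atTop (𝓝 LH)).sub hHt
  · simpa using (tendsto_const_nhds : Tendsto (fun _ : ℝ => LG) atTop (𝓝 LG)).sub hGt
  · intro x
    have h := le_ciSup hHbdd x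
    show 0 ≤ LH - H x
    linarith
  · intro x
    have h := le_ciSup hGbdd x
    show 0 ≤ LG - G x
    linarith
  · intro x hx
    have h := hfeq x hx
    show f x = (LH - H x) - (LG - G x)
    linarith

lemma intervalIntegrable_ofReal {f : ℝ → ℝ} {a b : ℝ} (h : IntervalIntegrable f volume a b) :
    IntervalIntegrable (fun x => (f x : ℂ)) volume a b := ⟨h.1.ofReal, h.2.ofReal⟩

set_option maxHeartbeats 1000000 in
lemma halfline_transform (f : ℝ → ℝ) (a : ℝ)
    (hfloc : ∀ c d : ℝ, IntervalIntegrable f volume c d)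
    {L₂ : ℝ} (hL : Tendsto (fun c => ∫ x in (0:ℝ)..c, f x) atTop (𝓝 L₂))
    (hBV : BoundedVariationOn f (Set.Ici a)) :
    ∃ S : ℝ → ℂ,
      (∀ y : ℝ, Tendsto (fun c => ∫ x in (0:ℝ)..c, (f x : ℂ) * fourierKernel x y)
        atTop (𝓝 (S y))) ∧
      ∀ y : ℝ, y ≠ 0 → ContinuousAt S y := by
  obtain ⟨φ₁, φ₂, hφ₁a, hφ₂a, hφ₁t, hφ₂t, hφ₁0, hφ₂0, hdecomp⟩ :=
    exists_antitone_decomp f a hfloc hL hBV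
  have hπ := Real.pi_pos
  have hker_cont : ∀ y, Continuous fun x => fourierKernel x y := fourierKernel_continuous_fst
  have hint : ∀ y c d, IntervalIntegrable (fun x => (f x : ℂ) * fourierKernel x y) volume c d :=
    fun y c d =>
      (intervalIntegrable_ofReal (hfloc c d)).mul_continuousOn (hker_cont y).continuousOn
  set F : ℝ → ℝ → ℂ := fun y c => ∫ x in (0:ℝ)..c, (f x : ℂ) * fourierKernel x y with hF
  have hsum : Tendsto (fun x => φ₁ x + φ₂ x) atTop (𝓝 0) := by
    simpa using hφ₁t.add hφ₂t
  have hsumpos : ∀ x, 0 ≤ φ₁ x + φ₂ x := fun x => add_nonneg (hφ₁0 x) (hφ₂0 x)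
  have htail : ∀ y : ℝ, y ≠ 0 → ∀ b c : ℝ, a ≤ b → b ≤ c →
      ‖∫ x in b..c, (f x : ℂ) * fourierKernel x y‖ ≤
        2 * (1 / (Real.pi * |y|)) * (φ₁ b + φ₂ b) := by
    intro y hy b c hab hbc
    have heq : Set.EqOn (fun x => (f x : ℂ) * fourierKernel x y)
        (fun x => (φ₁ x : ℂ) * fourierKernel x y - (φ₂ x : ℂ) * fourierKernel x y)
        (Set.uIcc b c) := by
      intro x hx
      rw [Set.uIcc_of_le hbc] at hx
      simp only
      rw [hdecomp x (le_trans hab hx.1)]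
      push_cast
      ring
    rw [intervalIntegral.integral_congr heq]
    have hi1 : IntervalIntegrable (fun x => (φ₁ x : ℂ) * fourierKernel x y) volume b c :=
      (intervalIntegrable_ofReal hφ₁a.intervalIntegrable).mul_continuousOn
        (hker_cont y).continuousOn
    have hi2 : IntervalIntegrable (fun x => (φ₂ x : ℂ) * fourierKernel x y) volume b c :=
      (intervalIntegrable_ofReal hφ₂a.intervalIntegrable).mul_continuousOn
        (hker_cont y).continuousOn
    rw [intervalIntegral.integral_sub hi1 hi2]
    apply (norm_sub_le _ _).trans
    have hM : (0:ℝ) ≤ 1 / (Real.pi * |y|) := by positivity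
    have h1 := dirichlet_bound hφ₁a hφ₁0 (hker_cont y)
      (fun x => le_of_eq (fourierKernel_norm x y)) hM (fourierKernel_prim hy) hbc
    have h2 := dirichlet_bound hφ₂a hφ₂0 (hker_cont y)
      (fun x => le_of_eq (fourierKernel_norm x y)) hM (fourierKernel_prim hy) hbc
    calc ‖∫ x in b..c, (φ₁ x : ℂ) * fourierKernel x y‖ +
          ‖∫ x in b..c, (φ₂ x : ℂ) * fourierKernel x y‖
        ≤ 2 * (1 / (Real.pi * |y|)) * φ₁ b + 2 * (1 / (Real.pi * |y|)) * φ₂ b := add_le_add h1 h2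
      _ = 2 * (1 / (Real.pi * |y|)) * (φ₁ b + φ₂ b) := by ring
  have hFdiff : ∀ y b c : ℝ, F y c - F y b = ∫ x in b..c, (f x : ℂ) * fourierKernel x y := by
    intro y b c
    simp only [hF]
    rw [← intervalIntegral.integral_add_adjacent_intervals (hint y 0 b) (hint y b c)]
    ring
  have hexists : ∀ y : ℝ, ∃ z : ℂ, Tendsto (fun c => F y c) atTop (𝓝 z) := by
    intro y
    by_cases hy : y = 0
    · subst hy
      refine ⟨(L₂ : ℂ), ?_⟩
      have hFz : ∀ c, F 0 c = ((∫ x in (0:ℝ)..c, f x : ℝ) : ℂ) := by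
        intro c
        simp only [hF, fourierKernel_zero, mul_one]
        exact RCLike.intervalIntegral_ofReal
      simp only [hFz]
      exact (Complex.continuous_ofReal.tendsto L₂).comp hL
    · apply cauchy_map_iff_exists_tendsto.1
      rw [Metric.cauchy_iff]
      refine ⟨map_neBot, fun ε hε => ?_⟩
      set M : ℝ := 1 / (Real.pi * |y|) with hMdef
      have habs : (0:ℝ) < |y| := abs_pos.2 hy
      have hM0 : 0 < M := by positivity
      have hδ : (0:ℝ) < ε / (2 * M + 1) := by positivity
      obtain ⟨N, hN⟩ := Filter.eventually_atTop.1
        ((hsum.eventually_lt_const hδ).and (eventually_ge_atTop a))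
      refine ⟨F y '' Set.Ici N, ?_, ?_⟩
      · exact Filter.image_mem_map (Ici_mem_atTop N)
      · rintro _ ⟨c, hc, rfl⟩ _ ⟨c', hc', rfl⟩
        have key : ∀ u v : ℝ, N ≤ u → u ≤ v → dist (F y u) (F y v) < ε := by
          intro u v hu huv
          rw [dist_eq_norm, norm_sub_rev, hFdiff]
          have h1 := htail y hy u v (hN u hu).2 huv
          have h2 := (hN u hu).1
          have h3 := hsumpos u
          calc ‖∫ x in u..v, (f x : ℂ) * fourierKernel x y‖
              ≤ 2 * M * (φ₁ u + φ₂ u) := h1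
            _ < ε := by
                have h4 : (φ₁ u + φ₂ u) * (2 * M + 1) < ε :=
                  (lt_div_iff₀ (by positivity : (0:ℝ) < 2 * M + 1)).1 h2
                nlinarith
        rcases le_total c c' with h | h
        · exact key c c' hc h
        · rw [dist_comm]
          exact key c' c hc' h
  set S : ℝ → ℂ := fun y => Classical.choose (hexists y) with hSdef
  have hS : ∀ y, Tendsto (fun c => F y c) atTop (𝓝 (S y)) :=
    fun y => Classical.choose_spec (hexists y)
  refine ⟨S, fun y => hS y, ?_⟩
  have hStail : ∀ y : ℝ, y ≠ 0 → ∀ b : ℝ, a ≤ b →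
      ‖S y - F y b‖ ≤ 2 * (1 / (Real.pi * |y|)) * (φ₁ b + φ₂ b) := by
    intro y hy b hb
    have h1 : Tendsto (fun c => ‖F y c - F y b‖) atTop (𝓝 ‖S y - F y b‖) :=
      ((hS y).sub tendsto_const_nhds).norm
    apply le_of_tendsto h1
    filter_upwards [eventually_ge_atTop b] with c hc
    rw [hFdiff]
    exact htail y hy b c hb hc
  intro y₀ hy₀
  rw [Metric.continuousAt_iff]
  intro ε hε
  have habs : (0:ℝ) < |y₀| := abs_pos.2 hy₀
  set M₀ : ℝ := 2 / (Real.pi * |y₀|) with hM₀def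
  have hM₀ : 0 < M₀ := by positivity
  have hsmall : ∀ᶠ x in atTop, 2 * M₀ * (φ₁ x + φ₂ x) < ε / 3 := by
    have h1 : Tendsto (fun x => 2 * M₀ * (φ₁ x + φ₂ x)) atTop (𝓝 0) := by
      simpa using hsum.const_mul (2 * M₀)
    exact h1.eventually_lt_const (by positivity)
  obtain ⟨b, hb⟩ := Filter.eventually_atTop.1 (hsmall.and (eventually_ge_atTop a))
  obtain ⟨hbsmall, hba⟩ := hb b le_rfl
  have hFcont : ContinuousAt (fun y => F y b) y₀ := by
    apply intervalIntegral.continuousAt_of_dominated_interval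
      (bound := fun x => ‖f x‖)
    · apply Filter.Eventually.of_forall
      intro y
      exact (intervalIntegrable_iff.1 (hint y 0 b)).aestronglyMeasurable
    · apply Filter.Eventually.of_forall
      intro y
      apply ae_of_all
      intro x _
      rw [norm_mul, Complex.norm_real, fourierKernel_norm, mul_one]
    · exact (hfloc 0 b).norm
    · apply ae_of_all
      intro x _
      exact (continuous_const.mul (fourierKernel_continuous_snd x)).continuousAt
  rw [Metric.continuousAt_iff] at hFcont
  obtain ⟨δ₁, hδ₁pos, hδ₁⟩ := hFcont (ε / 3) (by positivity)
  refine ⟨min δ₁ (|y₀| / 2), by positivity, ?_⟩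
  intro y hy
  have hy1 : dist y y₀ < δ₁ := lt_of_lt_of_le hy (min_le_left _ _)
  have hy2 : |y₀| / 2 ≤ |y| := by
    have h1 : dist y y₀ < |y₀| / 2 := lt_of_lt_of_le hy (min_le_right _ _)
    have h2 : |y₀| - |y| ≤ |y₀ - y| := abs_sub_abs_le_abs_sub y₀ y
    rw [dist_eq_norm, Real.norm_eq_abs, abs_sub_comm] at h1
    linarith
  have hyne : y ≠ 0 := by
    intro h
    rw [h, abs_zero] at hy2
    linarith
  have habsy : (0:ℝ) < |y| := abs_pos.2 hyne
  have hsumb := hsumpos b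
  have t1 : ‖S y - F y b‖ ≤ 2 * M₀ * (φ₁ b + φ₂ b) := by
    refine (hStail y hyne b hba).trans ?_
    apply mul_le_mul_of_nonneg_right _ hsumb
    apply mul_le_mul_of_nonneg_left _ (by norm_num : (0:ℝ) ≤ 2)
    rw [hM₀def, div_le_div_iff₀ (by positivity) (by positivity)]
    nlinarith
  have t2 : ‖S y₀ - F y₀ b‖ ≤ 2 * M₀ * (φ₁ b + φ₂ b) := by
    refine (hStail y₀ hy₀ b hba).trans ?_
    apply mul_le_mul_of_nonneg_right _ hsumb
    apply mul_le_mul_of_nonneg_left _ (by norm_num : (0:ℝ) ≤ 2)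
    rw [hM₀def, div_le_div_iff₀ (by positivity) (by positivity)]
    nlinarith
  have t3 : dist (F y b) (F y₀ b) < ε / 3 := hδ₁ hy1
  calc dist (S y) (S y₀) ≤ dist (S y) (F y b) + dist (F y b) (F y₀ b) + dist (F y₀ b) (S y₀) :=
        dist_triangle4 _ _ _ _
    _ < ε := by
        have d1 : dist (S y) (F y b) = ‖S y - F y b‖ := dist_eq_norm _ _
        have d3 : dist (F y₀ b) (S y₀) = ‖S y₀ - F y₀ b‖ := by
          rw [dist_eq_norm, norm_sub_rev]
        linarith

/-- **Continuity of the Fourier transform away from the origin.** If `f` is Lebesgue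
integrable on every compact interval, its improper integral over `ℝ` exists, and `f` is
of bounded variation on `(-∞,-a]` and on `[a,∞)` for some `a > 0`, then `f̂(y)` exists
for every `y` and `y ↦ f̂(y)` is continuous at every `y ≠ 0`. -/
theorem fourier_transform_continuous_away_from_zero (f : ℝ → ℝ) (a : ℝ) (ha : 0 < a)
    (hfloc : ∀ c d : ℝ, IntervalIntegrable f volume c d)
    (hfimp : ∃ L : ℝ, HasImpInt f L)
    (hBV₁ : BoundedVariationOn f (Set.Iic (-a)))
    (hBV₂ : BoundedVariationOn f (Set.Ici a)) :
    ∃ Ff : ℝ → ℂ,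
      (∀ y : ℝ, HasImpIntC (fun x => (f x : ℂ) * fourierKernel x y) (Ff y)) ∧
      (∀ y : ℝ, y ≠ 0 → ContinuousAt Ff y) := by
  obtain ⟨L, L₁, L₂, h₁, h₂, -⟩ := hfimp
  -- positive half-line
  obtain ⟨Sp, hSp, hSpc⟩ := halfline_transform f a hfloc h₂ hBV₂
  -- reflected function
  set g : ℝ → ℝ := fun x => f (-x) with hg
  have hgloc : ∀ c d : ℝ, IntervalIntegrable g volume c d := by
    intro c d
    have := (IntervalIntegrable.iff_comp_neg (f := f) (a := -c) (b := -d)).mp (hfloc (-c) (-d))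
    simpa using this
  have hgL : Tendsto (fun c => ∫ x in (0:ℝ)..c, g x) atTop (𝓝 L₁) := by
    have heq : ∀ c : ℝ, ∫ x in (0:ℝ)..c, g x = ∫ x in (-c)..(0:ℝ), f x := by
      intro c
      rw [hg]
      rw [intervalIntegral.integral_comp_neg f]
      norm_num
    simp only [heq]
    exact h₁.comp tendsto_neg_atTop_atBot
  have hgBV : BoundedVariationOn g (Set.Ici a) := by
    have hanti : AntitoneOn (fun x : ℝ => -x) (Set.Ici a) := fun x _ y _ hxy => neg_le_neg hxy
    have := eVariationOn.comp_eq_of_antitoneOn f (fun x : ℝ => -x) hanti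
    unfold BoundedVariationOn
    have himg : (fun x : ℝ => -x) '' Set.Ici a = Set.Iic (-a) := Set.image_neg_Ici a
    rw [show g = f ∘ (fun x : ℝ => -x) from rfl, this, himg]
    exact hBV₁
  obtain ⟨Sm, hSm, hSmc⟩ := halfline_transform g a hgloc hgL hgBV
  refine ⟨fun y => Sm (-y) + Sp y, ?_, ?_⟩
  · intro y
    refine ⟨Sm (-y), Sp y, ?_, hSp y, rfl⟩
    have heq : ∀ c : ℝ, ∫ x in c..(0:ℝ), (f x : ℂ) * fourierKernel x y =
        ∫ x in (0:ℝ)..(-c), (g x : ℂ) * fourierKernel x (-y) := by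
      intro c
      have h3 : ∀ x : ℝ, (g x : ℂ) * fourierKernel x (-y) =
          (fun u => (f u : ℂ) * fourierKernel u y) (-x) := by
        intro x
        simp only [hg, ← fourierKernel_neg]
      rw [intervalIntegral.integral_congr (g := fun x =>
          (fun u => (f u : ℂ) * fourierKernel u y) (-x)) (fun x _ => h3 x)]
      rw [intervalIntegral.integral_comp_neg (fun u => (f u : ℂ) * fourierKernel u y)]
      norm_num
    simp only [heq]
    exact (hSm (-y)).comp tendsto_neg_atBot_atTop
  · intro y hy
    have c1 : ContinuousAt (fun y : ℝ => Sm (-y)) y := by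
      have := (hSmc (-y) (neg_ne_zero.2 hy)).comp (continuous_neg.continuousAt (x := y))
      exact this
    exact c1.add (hSpc y hy)
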